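/- Let 𝒜 be a separated integral deformation of the braid arrangement on {1,…,n} satisfying the weak triangle inequality, let w be a valid m-acyclic weight function of 𝒜, let σ be its order of gains, and let g be its gain function. Then for each i with 1 < i ≤ n there is a directed path from σ(1) to σ(i) along present edges such that every edge weight on the path is nonnegative and the total weight of the path equals g(σ(i)). -/

import Mathlib

/-- Cyclically consecutive pairs along a list of vertices. -/
def cpairs {n : ℕ} (c : List (Fin n)) : List (Fin n × Fin n) := c.zip (c.rotate 1)

/-- `c` is a directed cycle of the weighted digraph `w`, an edge `u → v`
being present when `w u v ≠ ⊥` (`⊥` stands for `-∞`). -/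
def IsCycle {n : ℕ} (w : Fin n → Fin n → WithBot ℤ) (c : List (Fin n)) : Prop :=
  2 ≤ c.length ∧ c.Nodup ∧ ∀ p ∈ cpairs c, w p.1 p.2 ≠ ⊥

/-- Total weight of the edges of a cycle. -/
def cycWeight {n : ℕ} (w : Fin n → Fin n → WithBot ℤ) (c : List (Fin n)) : WithBot ℤ :=
  ((cpairs c).map fun p => w p.1 p.2).sum

/-- An `m`-ascending cycle: a directed cycle of nonnegative total weight. -/
def MAscending {n : ℕ} (w : Fin n → Fin n → WithBot ℤ) (c : List (Fin n)) : Prop :=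
  IsCycle w c ∧ 0 ≤ cycWeight w c

/-- A weighted digraph is `m`-acyclic if it has no `m`-ascending cycle. -/
def MAcyclic {n : ℕ} (w : Fin n → Fin n → WithBot ℤ) : Prop :=
  ∀ c : List (Fin n), ¬ MAscending w c

/-- `w` is a valid weight function of the contiguous integral deformation of
the braid arrangement determined by the bounds `a = α` and `b = β`:
`w i j ∈ {α i j, …, β i j} ∪ {⊥}`, `w i j = ⊥ ↔ w j i = β j i`, and
`w j i = -1 - w i j` whenever both values are finite.  There are no loops. -/
def ValidW {n : ℕ} (a b : Fin n → Fin n → ℤ) (w : Fin n → Fin n → WithBot ℤ) : Prop :=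
  (∀ i, w i i = ⊥) ∧
  ∀ i j : Fin n, i ≠ j →
    (w i j ≠ ⊥ → (a i j : WithBot ℤ) ≤ w i j ∧ w i j ≤ (b i j : WithBot ℤ)) ∧
    (w i j = ⊥ ↔ w j i = (b j i : WithBot ℤ)) ∧
    (∀ x y : ℤ, w i j = (x : WithBot ℤ) → w j i = (y : WithBot ℤ) → y = -1 - x)

/-- `w` is a valid weight function of the integral deformation of the braid
arrangement assigning the finite set `A i j` of integers to each pair `i < j`:
either `w i j = ⊥` and `w j i = -min (A i j)`, or `w i j = max (A i j)` and
`w j i = ⊥`, or `w i j = c` and `w j i = -c'` for two consecutive elements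
`c < c'` of `A i j`. -/
def ValidA {n : ℕ} (A : Fin n → Fin n → Finset ℤ) (w : Fin n → Fin n → WithBot ℤ) : Prop :=
  (∀ i, w i i = ⊥) ∧
  ∀ i j : Fin n, i < j →
    ((w i j = ⊥ ∧ ∃ c : ℤ, c ∈ A i j ∧ (∀ d ∈ A i j, c ≤ d) ∧ w j i = ((-c : ℤ) : WithBot ℤ))
     ∨ (w j i = ⊥ ∧ ∃ c : ℤ, c ∈ A i j ∧ (∀ d ∈ A i j, d ≤ c) ∧ w i j = ((c : ℤ) : WithBot ℤ))
     ∨ (∃ c c' : ℤ, c ∈ A i j ∧ c' ∈ A i j ∧ c < c' ∧ (∀ d ∈ A i j, ¬ (c < d ∧ d < c')) ∧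
         w i j = ((c : ℤ) : WithBot ℤ) ∧ w j i = ((-c' : ℤ) : WithBot ℤ)))

/-- The deformation given by `A` satisfies the weak triangle inequality. -/
def WeakTriangleA {n : ℕ} (A : Fin n → Fin n → Finset ℤ) : Prop :=
  ∀ w : Fin n → Fin n → WithBot ℤ, ValidA A w → MAcyclic w →
    ∀ i j k : Fin n, i ≠ j → j ≠ k → i ≠ k →
      0 ≤ w i j → 0 ≤ w j k → w i k ≤ w i j + w j k + 1

/-- Total weight of the edges of a (directed) path, given as its list of
vertices. -/
def pathWeight {n : ℕ} (w : Fin n → Fin n → WithBot ℤ) (p : List (Fin n)) : WithBot ℤ :=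
  ((p.zip p.tail).map fun q => w q.1 q.2).sum

lemma relW {n : ℕ} {A : Fin n → Fin n → Finset ℤ} {w : Fin n → Fin n → WithBot ℤ}
    (hw : ValidA A w) {x y : Fin n} (hxy : x ≠ y) {a b : ℤ}
    (hx : w x y = (a : WithBot ℤ)) (hy : w y x = (b : WithBot ℤ)) : a + b ≤ -1 := by
  rcases lt_or_gt_of_ne hxy with h | h
  · rcases hw.2 x y h with ⟨h1, _⟩ | ⟨h1, _⟩ | ⟨c, c', _, _, hlt, _, h1, h2⟩
    · rw [hx] at h1; exact absurd h1 (by simp)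
    · rw [hy] at h1; exact absurd h1 (by simp)
    · rw [hx] at h1; rw [hy] at h2
      have e1 : a = c := by exact_mod_cast h1
      have e2 : b = -c' := by exact_mod_cast h2
      omega
  · rcases hw.2 y x h with ⟨h1, _⟩ | ⟨h1, _⟩ | ⟨c, c', _, _, hlt, _, h1, h2⟩
    · rw [hy] at h1; exact absurd h1 (by simp)
    · rw [hx] at h1; exact absurd h1 (by simp)
    · rw [hy] at h1; rw [hx] at h2
      have e1 : b = c := by exact_mod_cast h1
      have e2 : a = -c' := by exact_mod_cast h2
      omega

section helpers
variable {n : ℕ} {A : Fin n → Fin n → Finset ℤ} {w : Fin n → Fin n → WithBot ℤ}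

lemma nonneg_ne_bot {x y : Fin n} (h : (0:WithBot ℤ) ≤ w x y) : w x y ≠ ⊥ := by
  intro hb; rw [hb] at h; simp at h

lemma chain'_present_of_nonneg {l : List (Fin n)}
    (h : List.Chain' (fun x y => (0:WithBot ℤ) ≤ w x y) l) :
    List.Chain' (fun x y => w x y ≠ ⊥) l :=
  h.imp fun _ _ hxy => nonneg_ne_bot hxy

lemma ordw (σ : Equiv.Perm (Fin n)) (hσ : ∀ i j : Fin n, i < j → 0 ≤ w (σ i) (σ j))
    {x y : Fin n} (h : σ.symm x < σ.symm y) : (0:WithBot ℤ) ≤ w x y := by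
  have := hσ (σ.symm x) (σ.symm y) h
  simpa using this

lemma wnn_ord (hw : ValidA A w) (σ : Equiv.Perm (Fin n))
    (hσ : ∀ i j : Fin n, i < j → 0 ≤ w (σ i) (σ j)) {x y : Fin n}
    (h : (0:WithBot ℤ) ≤ w x y) : σ.symm x < σ.symm y := by
  have hxy : x ≠ y := by
    intro e; subst e; rw [hw.1] at h; simp at h
  rcases lt_trichotomy (σ.symm x) (σ.symm y) with hlt | heq | hgt
  · exact hlt
  · exact absurd (σ.symm.injective heq) hxy
  · exfalso
    have h2 : (0:WithBot ℤ) ≤ w y x := ordw σ hσ hgt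
    obtain ⟨a, ha⟩ := WithBot.ne_bot_iff_exists.mp (nonneg_ne_bot h)
    obtain ⟨b, hb⟩ := WithBot.ne_bot_iff_exists.mp (nonneg_ne_bot h2)
    have hab := relW hw hxy ha.symm hb.symm
    have ha' : (0:ℤ) ≤ a := by rw [← ha] at h; exact_mod_cast h
    have hb' : (0:ℤ) ≤ b := by rw [← hb] at h2; exact_mod_cast h2
    omega

lemma ord_ne {σ : Equiv.Perm (Fin n)} {x y : Fin n} (h : σ.symm x < σ.symm y) : x ≠ y := by
  intro e; subst e; exact lt_irrefl _ h

end helpers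
lemma zip_tail_concat {n : ℕ} : ∀ (l : List (Fin n)) (u v : Fin n), l.getLast? = some u →
    (l ++ [v]).zip (l ++ [v]).tail = l.zip l.tail ++ [(u, v)]
  | [], u, v, h => by simp at h
  | [a], u, v, h => by simp_all
  | a :: b :: t, u, v, h => by
    have h' : (b :: t).getLast? = some u := by simpa using h
    have ih := zip_tail_concat (b :: t) u v h'
    simpa using ih

lemma pathWeight_concat {n : ℕ} (w : Fin n → Fin n → WithBot ℤ) (l : List (Fin n))
    (u v : Fin n) (h : l.getLast? = some u) :
    pathWeight w (l ++ [v]) = pathWeight w l + w u v := by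
  unfold pathWeight
  rw [zip_tail_concat l u v h]
  simp

lemma zip_rot {n : ℕ} : ∀ (l : List (Fin n)) (u v : Fin n), l.getLast? = some u →
    l.zip (l.tail ++ [v]) = l.zip l.tail ++ [(u, v)]
  | [], u, v, h => by simp at h
  | [a], u, v, h => by simp_all
  | a :: b :: t, u, v, h => by
    have h' : (b :: t).getLast? = some u := by simpa using h
    have ih := zip_rot (b :: t) u v h'
    simpa using ih

lemma pathWeight_cons₂ {n : ℕ} (w : Fin n → Fin n → WithBot ℤ) (x y : Fin n) (t : List (Fin n)) :
    pathWeight w (x :: y :: t) = w x y + pathWeight w (y :: t) := by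
  simp [pathWeight]

lemma pathWeight_singleton {n : ℕ} (w : Fin n → Fin n → WithBot ℤ) (x : Fin n) :
    pathWeight w [x] = 0 := by simp [pathWeight]

lemma pathWeight_append {n : ℕ} (w : Fin n → Fin n → WithBot ℤ) :
    ∀ (l2 l1 : List (Fin n)) (u : Fin n), l1.getLast? = some u →
    pathWeight w (l1 ++ l2) = pathWeight w l1 + pathWeight w (u :: l2)
  | [], l1, u, h => by simp [pathWeight_singleton]
  | a :: l2', l1, u, h => by
    have h1 : l1 ++ a :: l2' = (l1 ++ [a]) ++ l2' := by simp
    rw [h1, pathWeight_append w l2' (l1 ++ [a]) a (List.getLast?_concat (l := l1)),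
      pathWeight_cons₂, ← add_assoc, pathWeight_concat w l1 u a h]
termination_by l2 _ _ _ => l2.length

lemma cpairs_cons {n : ℕ} {D : List (Fin n)} {d xm : Fin n} (z : Fin n)
    (hd : D.head? = some d) (hxm : D.getLast? = some xm) :
    cpairs (z :: D) = (z, d) :: (D.zip D.tail ++ [(xm, z)]) := by
  rcases D with _ | ⟨d0, D'⟩
  · simp at hd
  · obtain rfl : d = d0 := by simpa using hd.symm
    unfold cpairs
    rw [List.rotate_cons_succ, List.rotate_zero]
    have h2 : (d :: D') ++ [z] = d :: (D' ++ [z]) := by simp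
    rw [h2, List.zip_cons_cons]
    have h3 := zip_rot (d :: D') xm z hxm
    simp only [List.tail_cons] at h3
    rw [h3]
    rfl

lemma chain'_mem_zip {n : ℕ} {R : Fin n → Fin n → Prop} :
    ∀ {l : List (Fin n)}, List.Chain' R l → ∀ q ∈ l.zip l.tail, R q.1 q.2
  | [], _, q, hq => by simp at hq
  | [a], _, q, hq => by simp at hq
  | a :: b :: t, h, q, hq => by
    rw [List.Chain', List.isChain_cons_cons] at h
    simp only [List.tail_cons, List.zip_cons_cons, List.mem_cons] at hq
    rcases hq with rfl | hq
    · exact h.1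
    · exact chain'_mem_zip h.2 q hq

lemma sum_ne_bot' : ∀ {L : List (WithBot ℤ)}, (∀ x ∈ L, x ≠ ⊥) → L.sum ≠ ⊥
  | [], _ => by simp
  | a :: t, h => by
    rw [List.sum_cons, Ne, WithBot.add_eq_bot]
    push_neg
    exact ⟨h a (by simp), sum_ne_bot' fun x hx => h x (by simp [hx])⟩

lemma pathWeight_ne_bot {n : ℕ} {w : Fin n → Fin n → WithBot ℤ} {p : List (Fin n)}
    (h : List.Chain' (fun x y => w x y ≠ ⊥) p) : pathWeight w p ≠ ⊥ := by
  refine sum_ne_bot' ?_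
  intro x hx
  simp only [List.mem_map] at hx
  obtain ⟨q, hq, rfl⟩ := hx
  exact chain'_mem_zip h q hq

lemma cycle_bound {n : ℕ} {A : Fin n → Fin n → Finset ℤ} {w : Fin n → Fin n → WithBot ℤ}
    (hw : ValidA A w) (hac : MAcyclic w) (σ : Equiv.Perm (Fin n))
    (hσ : ∀ i j : Fin n, i < j → 0 ≤ w (σ i) (σ j)) {D : List (Fin n)} {z d xm : Fin n}
    (hd : D.head? = some d) (hxm : D.getLast? = some xm)
    (hch : List.Chain' (fun x y => (0:WithBot ℤ) ≤ w x y) D)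
    (hzd : σ.symm z < σ.symm d) (hb : w xm z ≠ ⊥) :
    ¬ (0:WithBot ℤ) ≤ w z d + (pathWeight w D + w xm z) := by
  intro h0
  apply hac (z :: D)
  have hDne : D ≠ [] := by intro e; rw [e] at hd; simp at hd
  have hcp := cpairs_cons z hd hxm
  have hchord : List.Chain' (fun a b : Fin n => σ.symm a < σ.symm b) (z :: D) := by
    rcases D with _ | ⟨d0, D'⟩
    · simp at hd
    · obtain rfl : d = d0 := by simpa using hd.symm
      exact List.isChain_cons_cons.mpr ⟨hzd, hch.imp fun _ _ hab => wnn_ord hw σ hσ hab⟩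
  refine ⟨⟨?_, ?_, ?_⟩, ?_⟩
  · rcases D with _ | ⟨d0, D'⟩
    · simp at hd
    · simp
  · haveI : Trans (fun a b : Fin n => σ.symm a < σ.symm b) (fun a b : Fin n => σ.symm a < σ.symm b) (fun a b : Fin n => σ.symm a < σ.symm b) :=
      ⟨fun h1 h2 => lt_trans h1 h2⟩
    have hp := List.isChain_iff_pairwise.mp hchord
    exact hp.imp fun hab => ord_ne hab
  · intro p hp
    rw [hcp] at hp
    rcases List.mem_cons.mp hp with rfl | hp
    · exact nonneg_ne_bot (ordw σ hσ hzd)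
    · rcases List.mem_append.mp hp with hp | hp
      · exact chain'_mem_zip (chain'_present_of_nonneg hch) p hp
      · simp only [List.mem_singleton] at hp
        subst hp
        exact hb
  · have hcw : cycWeight w (z :: D) = w z d + (pathWeight w D + (w xm z + 0)) := by
      unfold cycWeight
      rw [hcp]
      simp [pathWeight]
    rw [hcw]
    simpa using h0

lemma splitFirstNeg {n : ℕ} {w : Fin n → Fin n → WithBot ℤ} :
    ∀ (q : List (Fin n)), List.Chain' (fun x y => (0:WithBot ℤ) ≤ w x y) q ∨
      ∃ P z R x, q = P ++ z :: R ∧ P ≠ [] ∧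
        List.Chain' (fun x y => (0:WithBot ℤ) ≤ w x y) P ∧ P.getLast? = some x ∧
        ¬ (0:WithBot ℤ) ≤ w x z
  | [] => Or.inl List.isChain_nil
  | [a] => Or.inl (List.isChain_singleton a)
  | a :: b :: t => by
    by_cases hab : (0:WithBot ℤ) ≤ w a b
    · rcases splitFirstNeg (b :: t) with h | ⟨P, z, R, x, heq, hne, hch, hlast, hneg⟩
      · exact Or.inl (List.isChain_cons_cons.mpr ⟨hab, h⟩)
      · rcases P with _ | ⟨p0, P'⟩
        · exact absurd rfl hne
        · rw [List.cons_append] at heq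
          injection heq with h1 h2
          subst h2
          subst h1
          exact Or.inr ⟨a :: b :: P', z, R, x, by simp, by simp,
            List.isChain_cons_cons.mpr ⟨hab, hch⟩, by simpa using hlast, hneg⟩
    · exact Or.inr ⟨[a], b, t, a, rfl, by simp, List.isChain_singleton a, rfl, hab⟩

lemma pathWeight_block {n : ℕ} (w : Fin n → Fin n → WithBot ℤ) {D : List (Fin n)} {d xm : Fin n}
    (hd : D.head? = some d) (hxm : D.getLast? = some xm) (y z : Fin n) :
    pathWeight w (y :: (D ++ [z])) = w y d + (pathWeight w D + (w xm z + 0)) := by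
  rcases D with _ | ⟨d0, D'⟩
  · simp at hd
  · obtain rfl : d = d0 := by simpa using hd.symm
    have h1 : y :: ((d :: D') ++ [z]) = y :: d :: (D' ++ [z]) := by simp
    rw [h1, pathWeight_cons₂]
    congr 1
    have h2 : d :: (D' ++ [z]) = (d :: D') ++ [z] := by simp
    rw [h2, pathWeight_append w [z] (d :: D') xm hxm, pathWeight_cons₂, pathWeight_singleton]

lemma lemB2 {n : ℕ} (hn : 0 < n) {A : Fin n → Fin n → Finset ℤ} {w : Fin n → Fin n → WithBot ℤ}
    (hw : ValidA A w) (hac : MAcyclic w) (hwt : WeakTriangleA A) (σ : Equiv.Perm (Fin n))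
    (hσ : ∀ i j : Fin n, i < j → 0 ≤ w (σ i) (σ j)) :
    ∀ (k : ℕ) (T D : List (Fin n)) (z d xm : Fin n), T.length ≤ k → T ≠ [] →
      T.head? = some (σ ⟨0, hn⟩) →
      List.Chain' (fun x y => (0:WithBot ℤ) ≤ w x y) (T ++ D) →
      D.head? = some d → D.getLast? = some xm →
      σ.symm z < σ.symm d → w xm z ≠ ⊥ →
      ∃ P', P'.head? = some (σ ⟨0, hn⟩) ∧
        List.Chain' (fun x y => (0:WithBot ℤ) ≤ w x y) P' ∧ P'.getLast? = some z ∧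
        pathWeight w (T ++ (D ++ [z])) ≤ pathWeight w P' ∧ P'.length ≤ T.length + 1 := by
  intro k
  induction k with
  | zero =>
    intro T D z d xm hk hTne _ _ _ _ _ _
    rcases T with _ | _
    · exact absurd rfl hTne
    · simp at hk
  | succ k IH =>
    intro T D z d xm hk hTne hhead hch hd hxm hzd hb
    have hDne : D ≠ [] := by intro e; rw [e] at hd; simp at hd
    obtain ⟨T₀, y, rfl⟩ : ∃ T₀ y, T = T₀ ++ [y] := by
      rcases List.eq_nil_or_concat T with h | ⟨T₀, y, h⟩
      · exact absurd h hTne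
      · exact ⟨T₀, y, by simpa using h⟩
    have hTlast : (T₀ ++ [y]).getLast? = some y := List.getLast?_concat
    have hsplit := List.isChain_append.mp hch
    have hchT := hsplit.1
    have hchD := hsplit.2.1
    have hyd : (0:WithBot ℤ) ≤ w y d := hsplit.2.2 y hTlast d hd
    have hLHS : pathWeight w ((T₀ ++ [y]) ++ (D ++ [z])) =
        pathWeight w (T₀ ++ [y]) + (w y d + (pathWeight w D + (w xm z + 0))) := by
      rw [pathWeight_append w (D ++ [z]) (T₀ ++ [y]) y hTlast, pathWeight_block w hd hxm y z]
    obtain ⟨pt, hpt⟩ := WithBot.ne_bot_iff_exists.mp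
      (pathWeight_ne_bot (chain'_present_of_nonneg hchT))
    obtain ⟨pd, hpd⟩ := WithBot.ne_bot_iff_exists.mp
      (pathWeight_ne_bot (chain'_present_of_nonneg hchD))
    obtain ⟨hv, hhv⟩ := WithBot.ne_bot_iff_exists.mp hb
    obtain ⟨a, ha⟩ := WithBot.ne_bot_iff_exists.mp (nonneg_ne_bot hyd)
    rcases lt_trichotomy (σ.symm z) (σ.symm y) with hlt | heq | hgt
    · -- recurse on shorter prefix
      rcases T₀ with _ | ⟨t0, T₀'⟩
      · obtain rfl : y = σ ⟨0, hn⟩ := by simpa using hhead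
        rw [Equiv.symm_apply_apply] at hlt
        simp [Fin.lt_def] at hlt
      · have hT₀ne : t0 :: T₀' ≠ [] := by simp
        have hres := IH (t0 :: T₀') (y :: D) z y xm
          (by simp at hk ⊢; omega) hT₀ne (by simpa using hhead)
          (by have h9 : (t0 :: T₀') ++ (y :: D) = ((t0 :: T₀') ++ [y]) ++ D := by simp
              rw [h9]; exact hch)
          rfl
          (by rcases D with _ | ⟨d0, D'⟩
              · exact absurd rfl hDne
              · rw [List.getLast?_cons_cons]; exact hxm)
          hlt hb
        obtain ⟨P', h1, h2, h3, h4, h5⟩ := hres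
        refine ⟨P', h1, h2, h3, ?_, ?_⟩
        · have h9 : ((t0 :: T₀') ++ [y]) ++ (D ++ [z]) = (t0 :: T₀') ++ ((y :: D) ++ [z]) := by
            simp
          rw [h9]; exact h4
        · simp at h5 ⊢; omega
    · -- z = y : truncate
      obtain rfl : z = y := σ.symm.injective heq
      have hcb := cycle_bound hw hac σ hσ hd hxm hchD hzd hb
      refine ⟨T₀ ++ [z], hhead, hchT, hTlast, ?_, by simp⟩
      rw [hLHS, ← hpt, ← hpd, ← hhv, ← ha]
      rw [← ha, ← hpd, ← hhv] at hcb
      have hcb' : ¬ ((0:ℤ) ≤ a + (pd + hv)) := by exact_mod_cast hcb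
      exact_mod_cast (show (pt + (a + (pd + (hv + 0))) : ℤ) ≤ pt by omega)
    · -- y before z : shortcut via triangle
      have hyz : (0:WithBot ℤ) ≤ w y z := ordw σ hσ hgt
      have hzd' : (0:WithBot ℤ) ≤ w z d := ordw σ hσ hzd
      have tri := hwt w hw hac y z d (ord_ne hgt) (ord_ne hzd) (ord_ne (lt_trans hgt hzd))
        hyz hzd'
      have hcb := cycle_bound hw hac σ hσ hd hxm hchD hzd hb
      obtain ⟨e, he⟩ := WithBot.ne_bot_iff_exists.mp (nonneg_ne_bot hyz)
      obtain ⟨zd, hzdv⟩ := WithBot.ne_bot_iff_exists.mp (nonneg_ne_bot hzd')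
      refine ⟨(T₀ ++ [y]) ++ [z], ?_, ?_, List.getLast?_concat, ?_, by simp⟩
      · rw [List.head?_append, hhead]; rfl
      · refine List.isChain_append.mpr ⟨hchT, List.isChain_singleton _, ?_⟩
        intro x hx y' hy'
        rw [hTlast] at hx
        simp only [Option.mem_some_iff, List.head?_cons] at hx hy'
        subst hx; subst hy'; exact hyz
      · rw [hLHS, pathWeight_concat w (T₀ ++ [y]) y z hTlast]
        rw [← hpt, ← hpd, ← hhv, ← ha, ← he]
        rw [← hzdv, ← hpd, ← hhv] at hcb
        rw [← ha, ← he, ← hzdv] at tri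
        have hcb' : ¬ ((0:ℤ) ≤ zd + (pd + hv)) := by exact_mod_cast hcb
        have tri' : a ≤ e + zd + 1 := by exact_mod_cast tri
        exact_mod_cast (show (pt + (a + (pd + (hv + 0))) : ℤ) ≤ pt + e by omega)

lemma lemC {n : ℕ} (hn : 0 < n) {A : Fin n → Fin n → Finset ℤ} {w : Fin n → Fin n → WithBot ℤ}
    (hw : ValidA A w) (hac : MAcyclic w) (hwt : WeakTriangleA A) (σ : Equiv.Perm (Fin n))
    (hσ : ∀ i j : Fin n, i < j → 0 ≤ w (σ i) (σ j)) :
    ∀ (k : ℕ) (q : List (Fin n)), q.length ≤ k → q ≠ [] →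
      q.head? = some (σ ⟨0, hn⟩) → List.Chain' (fun x y => w x y ≠ ⊥) q →
      ∃ q', q'.head? = some (σ ⟨0, hn⟩) ∧ q'.getLast? = q.getLast? ∧
        List.Chain' (fun x y => (0:WithBot ℤ) ≤ w x y) q' ∧
        pathWeight w q ≤ pathWeight w q' := by
  intro k
  induction k with
  | zero =>
    intro q hk hne _ _
    rcases q with _ | _
    · exact absurd rfl hne
    · simp at hk
  | succ k IH =>
    intro q hk hne hhead hch
    rcases splitFirstNeg (w := w) q with hq | ⟨P, z, R, x, rfl, hPne, hPch, hPlast, hneg⟩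
    · exact ⟨q, hhead, rfl, hq, le_refl _⟩
    · have hsplit := List.isChain_append.mp hch
      have hchzR : List.Chain' (fun x y => w x y ≠ ⊥) (z :: R) := hsplit.2.1
      have hxz : w x z ≠ ⊥ := hsplit.2.2 x hPlast z rfl
      have hxzne : x ≠ z := fun e => by rw [e] at hxz; exact hxz (hw.1 z)
      have hord : σ.symm z < σ.symm x := by
        rcases lt_trichotomy (σ.symm x) (σ.symm z) with h | h | h
        · exact absurd (ordw σ hσ h) hneg
        · exact absurd (σ.symm.injective h) hxzne
        · exact h
      have hheadP : P.head? = some (σ ⟨0, hn⟩) := by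
        rcases P with _ | ⟨p0, P'⟩
        · exact absurd rfl hPne
        · simpa using hhead
      obtain ⟨P₀, x', rfl⟩ : ∃ P₀ x', P = P₀ ++ [x'] := by
        rcases List.eq_nil_or_concat P with h | ⟨P₀, x', h⟩
        · exact absurd h hPne
        · exact ⟨P₀, x', by simpa using h⟩
      obtain rfl : x = x' := by
        have := List.getLast?_concat (l := P₀) (a := x')
        rw [hPlast] at this
        exact Option.some_injective _ this
      rcases P₀ with _ | ⟨q0, P₀'⟩
      · obtain rfl : x = σ ⟨0, hn⟩ := by simpa using hheadP
        rw [Equiv.symm_apply_apply] at hord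
        simp [Fin.lt_def] at hord
      · have hB := lemB2 hn hw hac hwt σ hσ (q0 :: P₀').length (q0 :: P₀') [x] z x x
          le_rfl (by simp) (by simpa using hheadP) hPch rfl rfl hord hxz
        obtain ⟨P', h1, h2, h3, h4, h5⟩ := hB
        have hP'ne : P' ≠ [] := by intro e; rw [e] at h1; simp at h1
        have hq2ch : List.Chain' (fun x y => w x y ≠ ⊥) (P' ++ R) := by
          refine List.isChain_append.mpr ⟨chain'_present_of_nonneg h2, hchzR.tail, ?_⟩
          intro x1 hx1 y1 hy1
          rw [h3] at hx1
          rcases R with _ | ⟨r0, R'⟩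
          · simp at hy1
          · simp only [Option.mem_some_iff, List.head?_cons] at hx1 hy1
            subst hx1; subst hy1
            exact (List.isChain_cons_cons.mp hchzR).1
        have hlen : (P' ++ R).length ≤ k := by
          simp only [List.length_append, List.length_cons, List.length_append] at hk h5 ⊢
          omega
        have hres := IH (P' ++ R) hlen (by simp [hP'ne])
          (by rw [List.head?_append, h1]; rfl) hq2ch
        obtain ⟨q', hq1, hq2, hq3, hq4⟩ := hres
        refine ⟨q', hq1, ?_, hq3, ?_⟩
        · rw [hq2]
          rcases R with _ | ⟨r0, R'⟩
          · have e1 : (P' ++ ([] : List (Fin n))).getLast? = some z := by simpa using h3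
            have e2 : (((q0 :: P₀') ++ [x]) ++ [z]).getLast? = some z :=
              List.getLast?_concat
            rw [e1]
            have e3 : ((q0 :: P₀') ++ [x]) ++ (z :: ([] : List (Fin n)))
                = ((q0 :: P₀') ++ [x]) ++ [z] := rfl
            rw [e3, e2]
          · rw [List.getLast?_append_of_ne_nil P' (by simp : (r0 :: R') ≠ []),
              List.getLast?_append_of_ne_nil _ (by simp : (z :: r0 :: R') ≠ []),
              List.getLast?_cons_cons]
        · have hPlast' : ((q0 :: P₀') ++ [x]).getLast? = some x := List.getLast?_concat
          have e4 : pathWeight w (((q0 :: P₀') ++ [x]) ++ z :: R)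
              = (pathWeight w ((q0 :: P₀') ++ [x]) + (w x z + 0)) + pathWeight w (z :: R) := by
            rw [pathWeight_append w (z :: R) _ x hPlast', pathWeight_cons₂, add_zero, add_assoc]
          have e5 : pathWeight w ((q0 :: P₀') ++ ([x] ++ [z]))
              = pathWeight w ((q0 :: P₀') ++ [x]) + (w x z + 0) := by
            have e6 : (q0 :: P₀') ++ ([x] ++ [z]) = ((q0 :: P₀') ++ [x]) ++ [z] := by simp
            rw [e6, pathWeight_append w [z] _ x hPlast', pathWeight_cons₂, pathWeight_singleton]
          rw [e4]
          calc (pathWeight w ((q0 :: P₀') ++ [x]) + (w x z + 0)) + pathWeight w (z :: R)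
              ≤ pathWeight w P' + pathWeight w (z :: R) := by
                refine add_le_add ?_ (le_refl _)
                rw [← e5]; exact h4
            _ = pathWeight w (P' ++ R) := (pathWeight_append w R P' z h3).symm
            _ ≤ pathWeight w q' := hq4

theorem stmt13 (n : ℕ) (hn : 0 < n) (A : Fin n → Fin n → Finset ℤ)
    (hA : ∀ i j : Fin n, i < j → (A i j).Nonempty)
    (hsep : ∀ i j : Fin n, i < j → (0 : ℤ) ∈ A i j)
    (hwt : WeakTriangleA A)
    (w : Fin n → Fin n → WithBot ℤ) (hw : ValidA A w) (hac : MAcyclic w)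
    (σ : Equiv.Perm (Fin n)) (hσ : ∀ i j : Fin n, i < j → 0 ≤ w (σ i) (σ j))
    (g : Fin n → WithBot ℤ)
    (hg : ∀ v : Fin n, IsGreatest
      {t : WithBot ℤ | ∃ p : List (Fin n), p.head? = some (σ ⟨0, hn⟩) ∧
        p.getLast? = some v ∧ List.Chain' (fun x y => w x y ≠ ⊥) p ∧ pathWeight w p = t}
      (g v)) :
    ∀ i : Fin n, (⟨0, hn⟩ : Fin n) < i →
      ∃ p : List (Fin n), p.head? = some (σ ⟨0, hn⟩) ∧ p.getLast? = some (σ i) ∧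
        List.Chain' (fun x y => (0 : WithBot ℤ) ≤ w x y) p ∧ pathWeight w p = g (σ i) := by
  intro i _
  obtain ⟨p, hp0, hpl, hpch, hpw⟩ := (hg (σ i)).1
  have hpne : p ≠ [] := by intro e; rw [e] at hp0; simp at hp0
  obtain ⟨q', hq1, hq2, hq3, hq4⟩ :=
    lemC hn hw hac hwt σ hσ p.length p le_rfl hpne hp0 hpch
  have hq'last : q'.getLast? = some (σ i) := by rw [hq2, hpl]
  have hle : pathWeight w q' ≤ g (σ i) :=
    (hg (σ i)).2 ⟨q', hq1, hq'last, chain'_present_of_nonneg hq3, rfl⟩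
  have heq : pathWeight w q' = g (σ i) := le_antisymm hle (hpw ▸ hq4)
  exact ⟨q', hq1, hq'last, hq3, heq⟩
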